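/- arXiv:1505.02454 — 2 statements merged into one kernel-verified Lean document; each statement's English description precedes it below -/
import Mathlib

section
/- Let h be an abelian restricted Lie algebra over k. For all r, s ∈ h, in the cobar construction Ω u(h) one has ω(r) + ω(s) − ω(r+s) = ∂¹( Σ_{i=1}^{p−1} ((p−1)!/(i!·(p−i)!)) r^i s^{p−i} ). Moreover ω(α r) = α^p ω(r) for every α ∈ k. -/
set_option linter.unusedSectionVars false
set_option linter.unnecessarySimpa false

open scoped TensorProduct

namespace PD

attribute [local instance 100] LieRing.ofAssociativeRing

/-- An abelian restricted Lie algebra over `k` (of characteristic `p`): an abelian Lie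
algebra (trivial bracket) together with its restricted `p`-th power map, which for an
abelian Lie algebra is additive and Frobenius-semilinear. -/
class AbRes (p : ℕ) (k : Type) (V : Type) [Field k] [AddCommGroup V] [Module k V] :
    Type where
  pMap : V → V
  pMap_add : ∀ x y : V, pMap (x + y) = pMap x + pMap y
  pMap_smul : ∀ (a : k) (x : V), pMap (a • x) = a ^ p • pMap x

/-- Type synonym equipping a module with its trivial (abelian) Lie algebra structure. -/
def Ab (V : Type) : Type := V

instance (V : Type) [AddCommGroup V] : AddCommGroup (Ab V) := inferInstanceAs (AddCommGroup V)

instance (k V : Type) [Field k] [AddCommGroup V] [Module k V] : Module k (Ab V) :=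
  inferInstanceAs (Module k V)

instance (V : Type) [AddCommGroup V] : LieRing (Ab V) :=
  { (inferInstanceAs (AddCommGroup (Ab V)) : AddCommGroup (Ab V)) with
    bracket := fun _ _ => 0
    add_lie := by intros; simp
    lie_add := by intros; simp
    lie_self := by intros; rfl
    leibniz_lie := by intros; simp }

instance (k V : Type) [Field k] [AddCommGroup V] [Module k V] : LieAlgebra k (Ab V) :=
  { (inferInstanceAs (Module k (Ab V)) : Module k (Ab V)) with
    lie_smul := by intros; show (0 : Ab V) = _ • (0 : Ab V); simp }

/-- The identity of `V`, viewed as a linear equivalence `V ≃ Ab V`. -/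
def toAb (k V : Type) [Field k] [AddCommGroup V] [Module k V] : V ≃ₗ[k] Ab V :=
  LinearEquiv.refl k V

section Core

variable (p : ℕ) [Fact (Nat.Prime p)] (k : Type) [Field k] [CharP k p]
variable (V : Type) [AddCommGroup V] [Module k V]
variable [AbRes p k V]

/-- The relation defining `u(h) = U(h)/(x^p - x^{[p]})`. -/
def uRel : UniversalEnvelopingAlgebra k (Ab V) → UniversalEnvelopingAlgebra k (Ab V) → Prop :=
  fun a b => ∃ x : V,
    a = (UniversalEnvelopingAlgebra.ι k (toAb k V x) : UniversalEnvelopingAlgebra k (Ab V)) ^ p ∧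
    b = UniversalEnvelopingAlgebra.ι k (toAb k V (AbRes.pMap (p := p) (k := k) x))

/-- The restricted universal enveloping algebra `u(h) := U(h)/(x^p − x^{[p]}, x ∈ h)`. -/
abbrev uRes : Type := RingQuot (uRel p k V)

/-- The canonical linear map `h → u(h)`. -/
noncomputable def mkι : V →ₗ[k] uRes p k V :=
  (RingQuot.mkAlgHom k (uRel p k V)).toLinearMap.comp
    ((UniversalEnvelopingAlgebra.ι k).toLinearMap.comp (toAb k V).toLinearMap)

lemma uea_comm (a b : Ab V) :
    (UniversalEnvelopingAlgebra.ι k a : UniversalEnvelopingAlgebra k (Ab V)) *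
      UniversalEnvelopingAlgebra.ι k b =
    UniversalEnvelopingAlgebra.ι k b * UniversalEnvelopingAlgebra.ι k a := by
  have h := (UniversalEnvelopingAlgebra.ι (R := k) (L := Ab V)).map_lie a b
  rw [show ⁅a, b⁆ = (0 : Ab V) from rfl, map_zero,
    LieRing.of_associative_ring_bracket] at h
  exact sub_eq_zero.1 h.symm

lemma mkι_comm (x y : V) : mkι p k V x * mkι p k V y = mkι p k V y * mkι p k V x := by
  show (RingQuot.mkAlgHom k (uRel p k V)) (UniversalEnvelopingAlgebra.ι k (toAb k V x)) *
      (RingQuot.mkAlgHom k (uRel p k V)) (UniversalEnvelopingAlgebra.ι k (toAb k V y)) = _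
  rw [← map_mul (RingQuot.mkAlgHom k (uRel p k V)), uea_comm, map_mul]
  rfl

lemma mkι_pow (x : V) :
    mkι p k V x ^ p = mkι p k V (AbRes.pMap (p := p) (k := k) x) := by
  show (RingQuot.mkAlgHom k (uRel p k V)) (UniversalEnvelopingAlgebra.ι k (toAb k V x)) ^ p = _
  rw [← map_pow]
  exact RingQuot.mkAlgHom_rel k ⟨x, rfl, rfl⟩

/-- Freshman's dream in any `k`-algebra (`k` of characteristic `p`), for commuting
elements. -/
lemma add_pow_charP {A : Type} [Ring A] [Algebra k A] {x y : A} (h : Commute x y) :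
    (x + y) ^ p = x ^ p + y ^ p := by
  obtain ⟨r, hr⟩ := h.exists_add_pow_prime_eq (Fact.out : Nat.Prime p)
  have hp0 : ((p : ℕ) : A) = 0 := by
    rw [← map_natCast (algebraMap k A) p, CharP.cast_eq_zero k p, map_zero]
  rw [hr, hp0, zero_mul, zero_mul, zero_mul, add_zero]

/-- Build a Lie algebra morphism (for the trivial bracket on `V`) from a linear map with
pairwise commuting images. -/
noncomputable def lieHomOfLinear {A : Type} [Ring A] [Algebra k A] (f : V →ₗ[k] A)
    (hf : ∀ x y : V, f x * f y = f y * f x) : Ab V →ₗ⁅k⁆ A :=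
  { toLinearMap := f.comp (toAb k V).symm.toLinearMap
    map_lie' := by
      intro x y
      show f.comp (toAb k V).symm.toLinearMap ((0 : Ab V)) = ⁅_, _⁆
      rw [LieRing.of_associative_ring_bracket]
      simp only [map_zero]
      exact (sub_eq_zero.2 (hf _ _)).symm }

/-- The universal property of `u(h)`: a linear map `f : h → A` with commuting images
satisfying `f(x)^p = f(x^{[p]})` extends to an algebra map `u(h) → A`. -/
noncomputable def extendAlg {A : Type} [Ring A] [Algebra k A] (f : V →ₗ[k] A)
    (hf : ∀ x y : V, f x * f y = f y * f x)
    (hp : ∀ x : V, f x ^ p = f (AbRes.pMap (p := p) (k := k) x)) :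
    uRes p k V →ₐ[k] A :=
  RingQuot.liftAlgHom k
    ⟨UniversalEnvelopingAlgebra.lift k (lieHomOfLinear (k := k) (V := V) f hf), by
      rintro a b ⟨x, rfl, rfl⟩
      simp only [map_pow, UniversalEnvelopingAlgebra.lift_ι_apply]
      exact hp x⟩

@[simp] lemma extendAlg_mkι {A : Type} [Ring A] [Algebra k A] (f : V →ₗ[k] A)
    (hf : ∀ x y : V, f x * f y = f y * f x)
    (hp : ∀ x : V, f x ^ p = f (AbRes.pMap (p := p) (k := k) x)) (x : V) :
    extendAlg p k V f hf hp (mkι p k V x) = f x := by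
  show RingQuot.liftAlgHom k _
    ((RingQuot.mkAlgHom k (uRel p k V)) (UniversalEnvelopingAlgebra.ι k (toAb k V x))) = f x
  rw [RingQuot.liftAlgHom_mkAlgHom_apply, UniversalEnvelopingAlgebra.lift_ι_apply]
  rfl

/-- The counit `ε : u(h) → k`. -/
noncomputable def counit : uRes p k V →ₐ[k] k :=
  extendAlg p k V (0 : V →ₗ[k] k) (by intros; simp) (by
    intro x
    simp [zero_pow (Nat.Prime.ne_zero (Fact.out : Nat.Prime p))])

/-- The augmentation ideal `u(h)⁺`, as a submodule. -/
noncomputable def Aplus : Submodule k (uRes p k V) :=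
  LinearMap.ker (counit p k V).toLinearMap

/-- `(u(h)⁺)^{⊗2}` viewed inside `u(h) ⊗ u(h)`. -/
noncomputable def AplusSq : Submodule k (uRes p k V ⊗[k] uRes p k V) :=
  Submodule.map₂ (TensorProduct.mk k (uRes p k V) (uRes p k V)) (Aplus p k V) (Aplus p k V)

/-- The comultiplication `Δ : u(h) → u(h) ⊗ u(h)`, the algebra map making every element
of `h` primitive. -/
noncomputable def comul : uRes p k V →ₐ[k] uRes p k V ⊗[k] uRes p k V :=
  extendAlg p k V
    (((TensorProduct.mk k (uRes p k V) (uRes p k V)).flip 1).comp (mkι p k V)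
      + (TensorProduct.mk k (uRes p k V) (uRes p k V) 1).comp (mkι p k V))
    (by
      intro x y
      simp only [LinearMap.add_apply, LinearMap.coe_comp, Function.comp_apply,
        TensorProduct.mk_apply, LinearMap.flip_apply]
      simp only [add_mul, mul_add, Algebra.TensorProduct.tmul_mul_tmul, one_mul, mul_one,
        mkι_comm p k V x y]
      abel)
    (by
      intro x
      simp only [LinearMap.add_apply, LinearMap.coe_comp, Function.comp_apply,
        TensorProduct.mk_apply, LinearMap.flip_apply]
      have hc : Commute ((mkι p k V x) ⊗ₜ[k] (1 : uRes p k V))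
          ((1 : uRes p k V) ⊗ₜ[k] (mkι p k V x)) := by
        unfold Commute SemiconjBy
        simp [Algebra.TensorProduct.tmul_mul_tmul]
      rw [add_pow_charP p k hc, Algebra.TensorProduct.tmul_pow, Algebra.TensorProduct.tmul_pow,
        one_pow, mkι_pow])

/-- The first cobar differential `∂¹(r) = 1 ⊗ r − Δ(r) + r ⊗ 1`. -/
noncomputable def d1 : uRes p k V →ₗ[k] uRes p k V ⊗[k] uRes p k V :=
  TensorProduct.mk k (uRes p k V) (uRes p k V) 1 - (comul p k V).toLinearMap
    + (TensorProduct.mk k (uRes p k V) (uRes p k V)).flip 1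

/-- The second cobar differential `∂²(r ⊗ s) = 1 ⊗ r ⊗ s − Δ(r) ⊗ s + r ⊗ Δ(s) − r ⊗ s ⊗ 1`. -/
noncomputable def d2 : uRes p k V ⊗[k] uRes p k V →ₗ[k]
    uRes p k V ⊗[k] (uRes p k V ⊗[k] uRes p k V) :=
  TensorProduct.mk k (uRes p k V) (uRes p k V ⊗[k] uRes p k V) 1
    - (TensorProduct.assoc k (uRes p k V) (uRes p k V) (uRes p k V)).toLinearMap.comp
        (LinearMap.rTensor (uRes p k V) (comul p k V).toLinearMap)
    + LinearMap.lTensor (uRes p k V) (comul p k V).toLinearMap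
    - (TensorProduct.assoc k (uRes p k V) (uRes p k V) (uRes p k V)).toLinearMap.comp
        ((TensorProduct.mk k (uRes p k V ⊗[k] uRes p k V) (uRes p k V)).flip 1)

/-- The element `ω(r) = ∑_{i=1}^{p−1} ((p−1)!/(i!(p−i)!)) rⁱ ⊗ r^{p−i}`. -/
noncomputable def omega (r : uRes p k V) : uRes p k V ⊗[k] uRes p k V :=
  ∑ i ∈ Finset.Ico 1 p,
    ((Nat.factorial (p-1) / (Nat.factorial i * Nat.factorial (p - i)) : ℕ) : k) •
      ((r ^ i) ⊗ₜ[k] (r ^ (p - i)))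

/-- The extension of `ρ_z : h → h` (with `ρ_z ∘ [p] = 0`) to a derivation of `u(h)`,
constructed through the trivial square-zero extension. -/
noncomputable def Dres (f : V →ₗ[k] V)
    (hf : ∀ x : V, f (AbRes.pMap (p := p) (k := k) x) = 0) :
    uRes p k V →ₗ[k] uRes p k V :=
  ((TrivSqZeroExt.sndHom (uRes p k V) (uRes p k V)).restrictScalars k).comp
    (extendAlg p k V
      ({ toFun := fun x => TrivSqZeroExt.inl (mkι p k V x)
              + TrivSqZeroExt.inr (mkι p k V (f x))
         map_add' := by
          intro x y
          simp only [map_add, TrivSqZeroExt.inl_add, TrivSqZeroExt.inr_add]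
          abel
         map_smul' := by
          intro c x
          simp only [map_smul, TrivSqZeroExt.inl_smul, TrivSqZeroExt.inr_smul, smul_add,
            RingHom.id_apply] } : V →ₗ[k] TrivSqZeroExt (uRes p k V) (uRes p k V))
      (by
        intro x y
        simp only [LinearMap.coe_mk, AddHom.coe_mk]
        simp only [add_mul, mul_add, TrivSqZeroExt.inl_mul_inl, TrivSqZeroExt.inl_mul_inr,
          TrivSqZeroExt.inr_mul_inl, TrivSqZeroExt.inr_mul_inr, smul_eq_mul,
          MulOpposite.smul_eq_mul_unop, MulOpposite.unop_op]
        rw [mkι_comm p k V x y, mkι_comm p k V x (f y), mkι_comm p k V (f x) y]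
        abel
      )
      (by
        intro x
        simp only [LinearMap.coe_mk, AddHom.coe_mk]
        have hc : Commute
            (TrivSqZeroExt.inl (mkι p k V x) : TrivSqZeroExt (uRes p k V) (uRes p k V))
            (TrivSqZeroExt.inr (mkι p k V (f x))) := by
          unfold Commute SemiconjBy
          rw [TrivSqZeroExt.inl_mul_inr, TrivSqZeroExt.inr_mul_inl, smul_eq_mul,
            MulOpposite.smul_eq_mul_unop, MulOpposite.unop_op, mkι_comm]
        rw [add_pow_charP p k hc]
        have h2 : (TrivSqZeroExt.inr (mkι p k V (f x)) :
            TrivSqZeroExt (uRes p k V) (uRes p k V)) ^ p = 0 := by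
          have h2' : (TrivSqZeroExt.inr (mkι p k V (f x)) :
              TrivSqZeroExt (uRes p k V) (uRes p k V)) ^ 2 = 0 := by
            rw [sq, TrivSqZeroExt.inr_mul_inr]
          have hle : 2 + (p - 2) = p := by
            have := (Fact.out : Nat.Prime p).two_le
            omega
          have hv : (TrivSqZeroExt.inr (mkι p k V (f x)) :
              TrivSqZeroExt (uRes p k V) (uRes p k V)) ^ p
              = (TrivSqZeroExt.inr (mkι p k V (f x)) :
              TrivSqZeroExt (uRes p k V) (uRes p k V)) ^ (2 + (p - 2)) := by rw [hle]
          rw [hv, pow_add, h2', zero_mul]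
        have h3 : (TrivSqZeroExt.inl (mkι p k V x) :
            TrivSqZeroExt (uRes p k V) (uRes p k V)) ^ p
            = TrivSqZeroExt.inl ((mkι p k V x) ^ p) :=
          (map_pow (TrivSqZeroExt.inlHom (uRes p k V) (uRes p k V)) (mkι p k V x) p).symm
        rw [h2, add_zero, h3, mkι_pow, hf x, map_zero, TrivSqZeroExt.inr_zero, add_zero]
      )).toLinearMap

/-- The action of `ρ_z` on `u(h) ⊗ u(h)`, i.e. `ρ ⊗ 1 + 1 ⊗ ρ`. -/
noncomputable def Dtens (f : V →ₗ[k] V)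
    (hf : ∀ x : V, f (AbRes.pMap (p := p) (k := k) x) = 0) :
    uRes p k V ⊗[k] uRes p k V →ₗ[k] uRes p k V ⊗[k] uRes p k V :=
  LinearMap.rTensor (uRes p k V) (Dres p k V f hf)
    + LinearMap.lTensor (uRes p k V) (Dres p k V f hf)

/-- `Φ_z` in (cobar) degree 1: `Φ_z(r) = r^p − λ r + ρ_z^{p−1}(r)`. -/
noncomputable def Phi1 (lam : k) (f : V →ₗ[k] V)
    (hf : ∀ x : V, f (AbRes.pMap (p := p) (k := k) x) = 0) (r : uRes p k V) : uRes p k V :=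
  r ^ p - lam • r + ((Dres p k V f hf) ^ (p - 1) : uRes p k V →ₗ[k] uRes p k V) r

/-- `Φ_z` in (cobar) degree 2: `Φ_z(χ) = χ^p − λ χ + (ρ_z ⊗ 1 + 1 ⊗ ρ_z)^{p−1}(χ)`,
the `p`-th power being the one of the ring `u(h) ⊗ u(h)`. -/
noncomputable def Phi2 (lam : k) (f : V →ₗ[k] V)
    (hf : ∀ x : V, f (AbRes.pMap (p := p) (k := k) x) = 0)
    (χ : uRes p k V ⊗[k] uRes p k V) : uRes p k V ⊗[k] uRes p k V :=
  χ ^ p - lam • χ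
    + ((Dtens p k V f hf) ^ (p - 1) :
        uRes p k V ⊗[k] uRes p k V →ₗ[k] uRes p k V ⊗[k] uRes p k V) χ

end Core

section Rep

variable (p : ℕ) [Fact (Nat.Prime p)] (k : Type) [Field k] [CharP k p]
variable {G V : Type} [AddCommGroup G] [Module k G] [AddCommGroup V] [Module k V]
variable [AbRes p k G] [AbRes p k V]

/-- An algebraic representation of the abelian restricted Lie algebra `g` on the abelian
restricted Lie algebra `h` (conditions (i)–(iv) of the definition of an algebraic
representation, specialized to abelian restricted Lie algebras: condition (iii) is then
vacuous, and in condition (iv) the right-hand side vanishes). -/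
structure IsAlgebraicRep (ρ : G →ₗ[k] Module.End k V) : Prop where
  comm : ∀ x y : G, ρ x * ρ y = ρ y * ρ x
  map_pMap : ∀ x : G, ρ (AbRes.pMap (p := p) (k := k) x) = ρ x ^ p
  annih : ∀ (x : G) (a : V), ρ x (AbRes.pMap (p := p) (k := k) a) = 0

end Rep


section More

variable (p : ℕ) [Fact (Nat.Prime p)] (k : Type) [Field k] [CharP k p]
variable (V : Type) [AddCommGroup V] [Module k V] [AbRes p k V]

/-- The functorial extension of a linear map of abelian restricted Lie algebras commuting
with the restricted maps, to an algebra map `u(h) → u(h')` (a morphism of Hopf algebras). -/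
noncomputable def uResMap (W : Type) [AddCommGroup W] [Module k W] [AbRes p k W]
    (f : V →ₗ[k] W)
    (hcompat : ∀ x : V, f (AbRes.pMap (p := p) (k := k) x)
      = AbRes.pMap (p := p) (k := k) (f x)) : uRes p k V →ₐ[k] uRes p k W :=
  extendAlg p k V ((mkι p k W).comp f) (fun x y => mkι_comm p k W (f x) (f y))
    (fun x => by
      simp only [LinearMap.coe_comp, Function.comp_apply]
      rw [mkι_pow, hcompat])

/-- `Φ_z` restricted to `h ⊆ u(h)`: `Φ_z(r) = r^{[p]} − λ r + ρ_z^{p−1}(r)`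
(for `r ∈ h` one has `r^p = r^{[p]}` in `u(h)`). -/
noncomputable def PhiV (lam : k) (f : Module.End k V) : V → V :=
  fun r => AbRes.pMap (p := p) (k := k) r - lam • r + (f ^ (p - 1)) r

/-- The abelian type determined by `ρ_z = f` and `z^{[p]} = λ z` is *permissible* if
`Ker ρ_z = Im Φ_z` on `h`. -/
noncomputable def Permissible (lam : k) (f : Module.End k V) : Prop :=
  {r : V | f r = 0} = Set.range (PhiV p k V lam f)

end More

section Iso

variable (p : ℕ) (k : Type) [Field k]

/-- An isomorphism of (abelian) restricted Lie algebras: a linear equivalence commuting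
with the restricted maps. -/
structure RestrictedLieIso (V W : Type) [AddCommGroup V] [Module k V] [AddCommGroup W]
    [Module k W] [AbRes p k V] [AbRes p k W] extends V ≃ₗ[k] W where
  map_pMap : ∀ x : V, toLinearEquiv (AbRes.pMap (p := p) (k := k) x)
    = AbRes.pMap (p := p) (k := k) (toLinearEquiv x)

/-- An isomorphism of abelian types `T = (g, h, ρ) → T' = (g', h', ρ')` : a pair
`(φ₁ : g' → g, φ₂ : h → h')` of restricted Lie algebra isomorphisms intertwining `ρ`
and `ρ'`. -/
structure AbTypeIso {G V G' V' : Type}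
    [AddCommGroup G] [Module k G] [AddCommGroup V] [Module k V]
    [AddCommGroup G'] [Module k G'] [AddCommGroup V'] [Module k V']
    [AbRes p k G] [AbRes p k V] [AbRes p k G'] [AbRes p k V']
    (ρ : G →ₗ[k] Module.End k V) (ρ' : G' →ₗ[k] Module.End k V') where
  e1 : RestrictedLieIso p k G' G
  e2 : RestrictedLieIso p k V V'
  compat : ∀ (x' : G') (a : V),
    e2.toLinearEquiv (ρ (e1.toLinearEquiv x') a) = ρ' x' (e2.toLinearEquiv a)

end Iso

section Hopf

variable (k : Type) [Field k]

/-- The primitive space `P(H)` of a bialgebra `H`. -/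
noncomputable def primSpace (H : Type) [Ring H] [Bialgebra k H] : Submodule k H where
  carrier := {x : H | Coalgebra.comul (R := k) x = x ⊗ₜ[k] (1 : H) + (1 : H) ⊗ₜ[k] x}
  add_mem' := by
    intro a b ha hb
    simp only [Set.mem_setOf_eq] at *
    rw [map_add, ha, hb, TensorProduct.add_tmul, TensorProduct.tmul_add]
    abel
  zero_mem' := by simp
  smul_mem' := by
    intro c x hx
    simp only [Set.mem_setOf_eq] at *
    rw [map_smul, hx, smul_add, TensorProduct.smul_tmul', ← TensorProduct.tmul_smul]

/-- A subcoalgebra of a bialgebra, as a submodule `C` with `Δ(C) ⊆ C ⊗ C`. -/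
def IsSubcoalgebra (H : Type) [Ring H] [Bialgebra k H] (C : Submodule k H) : Prop :=
  ∀ x ∈ C, Coalgebra.comul (R := k) x ∈ Submodule.map₂ (TensorProduct.mk k H H) C C

/-- A simple subcoalgebra: a nonzero subcoalgebra with no nonzero proper subcoalgebras. -/
def IsSimpleSubcoalgebra (H : Type) [Ring H] [Bialgebra k H] (C : Submodule k H) : Prop :=
  C ≠ ⊥ ∧ IsSubcoalgebra k H C ∧
    ∀ D ≤ C, IsSubcoalgebra k H D → D = ⊥ ∨ D = C

/-- The coradical of a bialgebra: the sum of all its simple subcoalgebras. -/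
noncomputable def coradical (H : Type) [Ring H] [Bialgebra k H] : Submodule k H :=
  sSup {C | IsSimpleSubcoalgebra k H C}

/-- A (finite-dimensional) bialgebra is connected if its coradical is one-dimensional. -/
def IsConnectedCoalg (H : Type) [Ring H] [Bialgebra k H] : Prop :=
  Module.finrank k ↥(coradical k H) = 1

/-- An isomorphism of Hopf algebras: an algebra isomorphism compatible with the
comultiplications and the counits. -/
structure HopfAlgIso (H1 H2 : Type) [Ring H1] [Ring H2] [HopfAlgebra k H1]
    [HopfAlgebra k H2] extends H1 ≃ₐ[k] H2 where
  map_comul : ∀ a : H1, Coalgebra.comul (R := k) (toAlgEquiv a)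
      = TensorProduct.map toAlgEquiv.toLinearMap toAlgEquiv.toLinearMap
          (Coalgebra.comul (R := k) a)
  map_counit : ∀ a : H1, Coalgebra.counit (R := k) (toAlgEquiv a) = Coalgebra.counit (R := k) a

end Hopf

section Realization

variable (p : ℕ) [Fact (Nat.Prime p)] (k : Type) [Field k] [CharP k p]
variable (n : ℕ) (V : Type) [AddCommGroup V] [Module k V] [AbRes p k V]

/-- A realization of the primitive deformation `u_z(D)` of `u(T)` associated to a datum
`D = (T, Θ, χ)` and `0 ≠ z ∈ g` with `z^{[p]} = λ z`: a connected Hopf algebra `H` of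
dimension `p^{n+1}` containing `u(h)` as a Hopf subalgebra and an element `Z` satisfying
the deformed relations `[Z, r] = ρ_z(r)`, `Z^p − λZ + Θ = 0`,
`Δ(Z) = Z ⊗ 1 + 1 ⊗ Z + χ`, generating `H` over `u(h)`, and whose primitive space is
exactly (the image of) `h`.  Here `D : u(h) → u(h)` is the derivation extending `ρ_z`. -/
structure PDRealization (D : uRes p k V →ₗ[k] uRes p k V) (lam : k) (Θ : uRes p k V)
    (χ : uRes p k V ⊗[k] uRes p k V) : Type 1 where
  H : Type
  [ringH : Ring H]
  [hopfH : HopfAlgebra k H]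
  findim : Module.finrank k H = p ^ (n + 1)
  connected : IsConnectedCoalg k H
  j : uRes p k V →ₐ[k] H
  j_inj : Function.Injective j
  j_comul : ∀ a : uRes p k V, Coalgebra.comul (R := k) (j a)
      = TensorProduct.map j.toLinearMap j.toLinearMap (comul p k V a)
  j_counit : ∀ a : uRes p k V, Coalgebra.counit (R := k) (j a) = counit p k V a
  Z : H
  gen : Algebra.adjoin k (Set.range j ∪ {Z}) = ⊤
  commZ : ∀ a : uRes p k V, Z * j a - j a * Z = j (D a)
  powZ : Z ^ p - lam • Z + j Θ = 0
  comulZ : Coalgebra.comul (R := k) Z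
      = Z ⊗ₜ[k] (1 : H) + (1 : H) ⊗ₜ[k] Z
        + TensorProduct.map j.toLinearMap j.toLinearMap χ
  prim : primSpace k H = Submodule.map (j.toLinearMap ∘ₗ mkι p k V) ⊤

/-- `D = (T, Θ, χ)` is a PD datum with respect to `z` (with `z^{[p]} = λz` and
`D` the derivation of `u(h)` extending `ρ_z`) iff the corresponding primitive
deformation `u_z(D)` exists, i.e. is a `p^{n+1}`-dimensional connected Hopf algebra whose
primitive space is (isomorphic to) `h`. -/
def IsPDDatum (D : uRes p k V →ₗ[k] uRes p k V) (lam : k) (Θ : uRes p k V)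
    (χ : uRes p k V ⊗[k] uRes p k V) : Prop :=
  Nonempty (PDRealization p k n V D lam Θ χ)

/-- Hopf algebra isomorphisms between (the underlying Hopf algebras of) two primitive
deformation realizations. -/
def RealIso {n' : ℕ} {V' : Type} [AddCommGroup V'] [Module k V'] [AbRes p k V']
    {D : uRes p k V →ₗ[k] uRes p k V} {lam : k} {Θ : uRes p k V}
    {χ : uRes p k V ⊗[k] uRes p k V}
    {D' : uRes p k V' →ₗ[k] uRes p k V'} {lam' : k} {Θ' : uRes p k V'}
    {χ' : uRes p k V' ⊗[k] uRes p k V'}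
    (R : PDRealization p k n V D lam Θ χ)
    (R' : PDRealization p k n' V' D' lam' Θ' χ') : Type :=
  letI := R.ringH; letI := R.hopfH; letI := R'.ringH; letI := R'.hopfH
  HopfAlgIso k R.H R'.H

end Realization

section Points

variable (p n : ℕ) [Fact (Nat.Prime p)] (k : Type) [Field k] [CharP k p]
variable (V : Type) [AddCommGroup V] [Module k V] [AbRes p k V]

/-- Index set for the coordinates `a_{ij}`, `1 ≤ i < j ≤ n`. -/
abbrev UpperIdx (n : ℕ) : Type := {ij : Fin n × Fin n // ij.1 < ij.2}

/-- A point of the affine space `𝔸^{n(n+1)/2}`, with coordinates `(a_{ij}, b_k)`. -/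
abbrev Pt (n : ℕ) (k : Type) : Type := (UpperIdx n → k) × (Fin n → k)

/-- The 2-cocycle `χ_P = ∑_{i<j} a_{ij} x_i ⊗ x_j + ω(∑_k b_k x_k)` associated to a point
`P ∈ 𝔸^{n(n+1)/2}` and a basis `x` of `h`. -/
noncomputable def chiP (x : Module.Basis (Fin n) k V) (P : Pt n k) :
    uRes p k V ⊗[k] uRes p k V :=
  (∑ q : UpperIdx n,
      P.1 q • ((mkι p k V (x q.1.1)) ⊗ₜ[k] (mkι p k V (x q.1.2))))
    + omega p k V (mkι p k V (∑ j, P.2 j • x j))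

/-- A point `P` is admissible w.r.t. the type `T` if there is `s ∈ u(h)⁺` with
`Φ_z(χ_P) = ∂¹(s)` and `ρ_z(s) = 0`. -/
noncomputable def IsAdmissible (lam : k) (f : V →ₗ[k] V)
    (hf : ∀ a : V, f (AbRes.pMap (p := p) (k := k) a) = 0)
    (x : Module.Basis (Fin n) k V) (P : Pt n k) : Prop :=
  ∃ s ∈ Aplus p k V, Phi2 p k V lam f hf (chiP p n k V x P) = d1 p k V s
    ∧ Dres p k V f hf s = 0

/-- The characterization of PD data: `(T, Θ, χ)` is a PD datum w.r.t. `z` iff `χ` is a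
2-cocycle which is not a 2-coboundary, `ρ_z(Θ) = 0` and `Φ_z(χ) = ∂¹(Θ)`. -/
noncomputable def IsPDDatumC (lam : k) (f : V →ₗ[k] V)
    (hf : ∀ a : V, f (AbRes.pMap (p := p) (k := k) a) = 0)
    (Θ : uRes p k V) (χ : uRes p k V ⊗[k] uRes p k V) : Prop :=
  Θ ∈ Aplus p k V ∧ χ ∈ AplusSq p k V ∧ d2 p k V χ = 0 ∧
    (¬ ∃ s ∈ Aplus p k V, χ = d1 p k V s) ∧
    Dres p k V f hf Θ = 0 ∧ Phi2 p k V lam f hf χ = d1 p k V Θ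

/-- The equivalence relation on PD data defining `ℋ²(T)`:
`(Θ, χ) ∼ (Θ', χ')` iff `Θ' − Θ = Φ_z(s)` and `χ' − χ = ∂¹(s)` for some `s ∈ u(h)⁺`. -/
noncomputable def PDEquiv (lam : k) (f : V →ₗ[k] V)
    (hf : ∀ a : V, f (AbRes.pMap (p := p) (k := k) a) = 0)
    (d d' : uRes p k V × (uRes p k V ⊗[k] uRes p k V)) : Prop :=
  ∃ s ∈ Aplus p k V, d'.1 - d.1 = Phi1 p k V lam f hf s ∧ d'.2 - d.2 = d1 p k V s

/-- The action of an automorphism `φ = (γ, G) ∈ Aut(T)` on points of `𝔸^{n(n+1)/2}`: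
`ã_{ij} = ∑_{r<s} γ(G_{ri}G_{sj} − G_{rj}G_{si}) a_{rs}`,
`b̃_k = ∑_s γ^{1/p} G_{sk} b_s`. -/
noncomputable def actPt [PerfectRing k p] (γ : k) (Gm : Matrix (Fin n) (Fin n) k)
    (P : Pt n k) : Pt n k :=
  (fun q' => ∑ q : UpperIdx n,
      γ * (Gm q.1.1 q'.1.1 * Gm q.1.2 q'.1.2 - Gm q.1.1 q'.1.2 * Gm q.1.2 q'.1.1) * P.1 q,
   fun j => ∑ s : Fin n, (frobeniusEquiv k p).symm γ * Gm s j * P.2 s)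

end Points

end PD

section OmegaWAux
open Finset

variable (p : ℕ) [Fact (Nat.Prime p)]

lemma pd_cmul (i : ℕ) (h1 : 0 < i) (h2 : i < p) :
    (Nat.factorial (p-1) / (Nat.factorial i * Nat.factorial (p-i))) * p = p.choose i := by
  have hp : Nat.Prime p := Fact.out
  have hfac : Nat.factorial p = p * Nat.factorial (p-1) :=
    (Nat.mul_factorial_pred hp.ne_zero).symm
  have hcop : Nat.Coprime p (Nat.factorial i * Nat.factorial (p-i)) :=
    Nat.Coprime.mul_right
      ((hp.coprime_iff_not_dvd).mpr (fun h => absurd ((Nat.Prime.dvd_factorial hp).mp h) (by omega)))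
      ((hp.coprime_iff_not_dvd).mpr (fun h => absurd ((Nat.Prime.dvd_factorial hp).mp h) (by omega)))
  have hd : (Nat.factorial i * Nat.factorial (p-i)) ∣ Nat.factorial (p-1) := by
    have hdvd : (Nat.factorial i * Nat.factorial (p-i)) ∣ p * Nat.factorial (p-1) := by
      rw [← hfac]
      exact Nat.factorial_mul_factorial_dvd_factorial (le_of_lt h2)
    exact (Nat.Coprime.dvd_of_dvd_mul_left hcop.symm hdvd)
  rw [Nat.choose_eq_factorial_div_factorial (le_of_lt h2), hfac,
    Nat.mul_div_assoc p hd, mul_comm]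

/-- `W(u,v) = ∑_{i=1}^{p-1} ((p-1)!/(i!(p-i)!)) uⁱ v^{p-i}`. -/
def Wsum {S : Type} [Ring S] (u v : S) : S :=
  ∑ i ∈ Finset.Ico 1 p,
    ((Nat.factorial (p-1) / (Nat.factorial i * Nat.factorial (p-i)) : ℕ) : S)
      * (u ^ i * v ^ (p - i))

omit [Fact (Nat.Prime p)] in
lemma Wsum_map {S S' : Type} [Ring S] [Ring S'] {F : Type} [FunLike F S S']
    [RingHomClass F S S'] (f : F) (u v : S) :
    f (Wsum p u v) = Wsum p (f u) (f v) := by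
  simp only [Wsum, map_sum, map_mul, map_pow, map_natCast]

lemma pmulWsum {S : Type} [CommRing S] (u v : S) :
    (p : S) * Wsum p u v = (u + v) ^ p - u ^ p - v ^ p := by
  have hp : 0 < p := (Fact.out : Nat.Prime p).pos
  have h2 : ∀ i ∈ Finset.Ico 1 p, u ^ i * v ^ (p-i) * (p.choose i : S)
      = (p:S) * (((Nat.factorial (p-1) / (Nat.factorial i * Nat.factorial (p-i)) : ℕ) : S)
          * (u ^ i * v ^ (p-i))) := by
    intro i hi
    obtain ⟨hi1, hi2⟩ := Finset.mem_Ico.mp hi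
    rw [← pd_cmul p i hi1 hi2, Nat.cast_mul]
    ring
  have h1 : (u+v)^p = v ^ p + (∑ i ∈ Finset.Ico 1 p,
      (p:S) * (((Nat.factorial (p-1) / (Nat.factorial i * Nat.factorial (p-i)) : ℕ) : S)
        * (u ^ i * v ^ (p-i)))) + u ^ p := by
    rw [add_pow, Finset.sum_range_succ, Finset.range_eq_Ico, Finset.sum_eq_sum_Ico_succ_bot hp,
      Finset.sum_congr rfl h2]
    simp
  rw [h1, Wsum, Finset.mul_sum]
  abel

lemma keyW_poly :
    Wsum p (MvPolynomial.X 0 : MvPolynomial (Fin 4) ℤ) (MvPolynomial.X 2)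
        + Wsum p (MvPolynomial.X 1) (MvPolynomial.X 3)
        - Wsum p (MvPolynomial.X 0 + MvPolynomial.X 1) (MvPolynomial.X 2 + MvPolynomial.X 3)
      = Wsum p (MvPolynomial.X 2) (MvPolynomial.X 3)
        - Wsum p (MvPolynomial.X 0 + MvPolynomial.X 2) (MvPolynomial.X 1 + MvPolynomial.X 3)
        + Wsum p (MvPolynomial.X 0) (MvPolynomial.X 1) := by
  have hp : Nat.Prime p := Fact.out
  have hp0 : ((p : ℕ) : MvPolynomial (Fin 4) ℤ) ≠ 0 := Nat.cast_ne_zero.mpr hp.ne_zero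
  rw [← sub_eq_zero]
  have h : ((p : ℕ) : MvPolynomial (Fin 4) ℤ) * (
      Wsum p (MvPolynomial.X 0 : MvPolynomial (Fin 4) ℤ) (MvPolynomial.X 2)
        + Wsum p (MvPolynomial.X 1) (MvPolynomial.X 3)
        - Wsum p (MvPolynomial.X 0 + MvPolynomial.X 1) (MvPolynomial.X 2 + MvPolynomial.X 3)
      - (Wsum p (MvPolynomial.X 2) (MvPolynomial.X 3)
        - Wsum p (MvPolynomial.X 0 + MvPolynomial.X 2) (MvPolynomial.X 1 + MvPolynomial.X 3)
        + Wsum p (MvPolynomial.X 0) (MvPolynomial.X 1))) = 0 := by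
    simp only [mul_sub, mul_add, pmulWsum p]
    ring
  rcases mul_eq_zero.mp h with h' | h'
  · exact absurd h' hp0
  · exact h'

lemma keyW {S : Type} [CommRing S] (u v u' v' : S) :
    Wsum p u u' + Wsum p v v' - Wsum p (u + v) (u' + v')
      = Wsum p u' v' - Wsum p (u + u') (v + v') + Wsum p u v := by
  have h := congrArg (MvPolynomial.eval₂Hom (Int.castRingHom S) ![u, v, u', v']) (keyW_poly p)
  simpa only [map_add, map_sub, Wsum_map, MvPolynomial.eval₂Hom_X',
    Matrix.cons_val_zero, Matrix.cons_val_one, Matrix.head_cons, Matrix.cons_val_two,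
    Matrix.tail_cons, Matrix.cons_val_three, Matrix.head_fin_const] using h

lemma keyW_comm {T : Type} [Ring T] (x y x' y' : T)
    (hxy : Commute x y) (hxx' : Commute x x') (hxy' : Commute x y')
    (hyx' : Commute y x') (hyy' : Commute y y') (hx'y' : Commute x' y') :
    Wsum p x x' + Wsum p y y' - Wsum p (x + y) (x' + y')
      = Wsum p x' y' - Wsum p (x + x') (y + y') + Wsum p x y := by
  classical
  letI : CommRing (Polynomial (Polynomial (Polynomial (Polynomial ℤ)))) :=
    @Polynomial.commRing (Polynomial (Polynomial (Polynomial ℤ))) inferInstance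
  let f1 : ℤ →+* T := Int.castRingHom T
  let f2 : Polynomial ℤ →+* T :=
    Polynomial.eval₂RingHom' f1 x (fun a => (Int.cast_commute a x))
  have c2 : ∀ t : T, Commute x t → ∀ a : Polynomial ℤ, Commute (f2 a) t := by
    intro t hxt a
    induction a using Polynomial.induction_on with
    | C r => simpa [f2] using Int.cast_commute r t
    | add u v hu hv => rw [map_add]; exact hu.add_left hv
    | monomial n r ih =>
        rw [pow_succ, ← mul_assoc, map_mul]
        have hX : f2 Polynomial.X = x := by simp [f2]
        rw [hX]
        exact ih.mul_left hxt
  let f3 : Polynomial (Polynomial ℤ) →+* T :=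
    Polynomial.eval₂RingHom' f2 y (fun a => c2 y hxy a)
  have c3 : ∀ t : T, Commute x t → Commute y t →
      ∀ a : Polynomial (Polynomial ℤ), Commute (f3 a) t := by
    intro t hxt hyt a
    induction a using Polynomial.induction_on with
    | C r => simpa [f3] using c2 t hxt r
    | add u v hu hv => rw [map_add]; exact hu.add_left hv
    | monomial n r ih =>
        rw [pow_succ, ← mul_assoc, map_mul]
        have hX : f3 Polynomial.X = y := by simp [f3]
        rw [hX]
        exact ih.mul_left hyt
  let f4 : Polynomial (Polynomial (Polynomial ℤ)) →+* T :=
    Polynomial.eval₂RingHom' f3 x' (fun a => c3 x' hxx' hyx' a)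
  have c4 : ∀ t : T, Commute x t → Commute y t → Commute x' t →
      ∀ a : Polynomial (Polynomial (Polynomial ℤ)), Commute (f4 a) t := by
    intro t hxt hyt hx't a
    induction a using Polynomial.induction_on with
    | C r => simpa [f4] using c3 t hxt hyt r
    | add u v hu hv => rw [map_add]; exact hu.add_left hv
    | monomial n r ih =>
        rw [pow_succ, ← mul_assoc, map_mul]
        have hX : f4 Polynomial.X = x' := by simp [f4]
        rw [hX]
        exact ih.mul_left hx't
  let f5 : Polynomial (Polynomial (Polynomial (Polynomial ℤ))) →+* T :=
    Polynomial.eval₂RingHom' f4 y' (fun a => c4 y' hxy' hyy' hx'y' a)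
  have e1 : f5 (Polynomial.C (Polynomial.C (Polynomial.C Polynomial.X))) = x := by
    simp [f5, f4, f3, f2]
  have e2 : f5 (Polynomial.C (Polynomial.C Polynomial.X)) = y := by
    simp [f5, f4, f3]
  have e3 : f5 (Polynomial.C Polynomial.X) = x' := by simp [f5, f4]
  have e4 : f5 Polynomial.X = y' := by simp [f5]
  have h2 := congrArg f5 (keyW p
    (Polynomial.C (Polynomial.C (Polynomial.C Polynomial.X)))
    (Polynomial.C (Polynomial.C Polynomial.X)) (Polynomial.C Polynomial.X) Polynomial.X)
  simp only [map_add, map_sub, Wsum_map, e1, e2, e3, e4] at h2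
  exact h2

end OmegaWAux


open PD in
/-- Let `h` be an abelian restricted Lie algebra over `k`.  For all
`r, s ∈ h`, in the cobar construction `Ω u(h)` one has
`ω(r) + ω(s) − ω(r+s) = ∂¹( ∑_{i=1}^{p−1} ((p−1)!/(i!(p−i)!)) rⁱ s^{p−i} )`.
Moreover `ω(αr) = α^p ω(r)` for every `α ∈ k`. -/
theorem omega_sum_difference_is_coboundary
    (p : ℕ) [Fact (Nat.Prime p)] (k : Type) [Field k] [CharP k p] [IsAlgClosed k]
    (V : Type) [AddCommGroup V] [Module k V] [AbRes p k V] :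
    (∀ r s : V,
      omega p k V (mkι p k V r) + omega p k V (mkι p k V s)
          - omega p k V (mkι p k V (r + s))
        = d1 p k V (∑ i ∈ Finset.Ico 1 p,
            ((Nat.factorial (p - 1) / (Nat.factorial i * Nat.factorial (p - i)) : ℕ) : k) •
              ((mkι p k V r) ^ i * (mkι p k V s) ^ (p - i))))
    ∧ (∀ (α : k) (r : V),
        omega p k V (mkι p k V (α • r)) = α ^ p • omega p k V (mkι p k V r)) := by
  constructor
  · intro r s
    have hab : mkι p k V r * mkι p k V s = mkι p k V s * mkι p k V r := mkι_comm p k V r s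
    set a := mkι p k V r with ha
    set b := mkι p k V s with hb
    have hΔ : ∀ x : V, comul p k V (mkι p k V x)
        = mkι p k V x ⊗ₜ[k] (1 : uRes p k V) + (1 : uRes p k V) ⊗ₜ[k] mkι p k V x := by
      intro x
      show extendAlg p k V _ _ _ (mkι p k V x) = _
      rw [extendAlg_mkι]
      simp [TensorProduct.mk_apply]
    have hsm : ∀ (n : ℕ) (z : uRes p k V ⊗[k] uRes p k V),
        ((n : k) • z) = (n : uRes p k V ⊗[k] uRes p k V) * z := fun n z => by
      rw [Nat.cast_smul_eq_nsmul, nsmul_eq_mul]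
    have hω : ∀ c : uRes p k V,
        omega p k V c = Wsum p (c ⊗ₜ[k] (1 : uRes p k V)) ((1 : uRes p k V) ⊗ₜ[k] c) := by
      intro c
      rw [omega, Wsum]
      refine Finset.sum_congr rfl (fun i hi => ?_)
      simp only [Algebra.TensorProduct.tmul_pow, Algebra.TensorProduct.tmul_mul_tmul,
        one_pow, one_mul, mul_one, hsm]
    set t := ∑ i ∈ Finset.Ico 1 p,
        ((Nat.factorial (p - 1) / (Nat.factorial i * Nat.factorial (p - i)) : ℕ) : k) •
          (a ^ i * b ^ (p - i)) with ht
    have hd1 : d1 p k V t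
        = (1 : uRes p k V) ⊗ₜ[k] t - comul p k V t + t ⊗ₜ[k] (1 : uRes p k V) := by
      simp [d1, TensorProduct.mk_apply]
    have h1t : (1 : uRes p k V) ⊗ₜ[k] t
        = Wsum p ((1 : uRes p k V) ⊗ₜ[k] a) ((1 : uRes p k V) ⊗ₜ[k] b) := by
      rw [ht, TensorProduct.tmul_sum, Wsum]
      refine Finset.sum_congr rfl (fun i hi => ?_)
      simp only [TensorProduct.tmul_smul, TensorProduct.smul_tmul',
        Algebra.TensorProduct.tmul_pow, Algebra.TensorProduct.tmul_mul_tmul,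
        one_pow, one_mul, mul_one, hsm]
    have ht1 : t ⊗ₜ[k] (1 : uRes p k V)
        = Wsum p (a ⊗ₜ[k] (1 : uRes p k V)) (b ⊗ₜ[k] (1 : uRes p k V)) := by
      rw [ht, TensorProduct.sum_tmul, Wsum]
      refine Finset.sum_congr rfl (fun i hi => ?_)
      simp only [← TensorProduct.smul_tmul', Algebra.TensorProduct.tmul_pow,
        Algebra.TensorProduct.tmul_mul_tmul, one_pow, one_mul, mul_one, hsm]
    have hΔt : comul p k V t
        = Wsum p (a ⊗ₜ[k] (1 : uRes p k V) + (1 : uRes p k V) ⊗ₜ[k] a)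
            (b ⊗ₜ[k] (1 : uRes p k V) + (1 : uRes p k V) ⊗ₜ[k] b) := by
      rw [ht, map_sum, Wsum]
      refine Finset.sum_congr rfl (fun i hi => ?_)
      rw [map_smul, map_mul, map_pow, map_pow, hΔ, hΔ, hsm]
    have hadd : mkι p k V (r + s) = a + b := map_add (mkι p k V) r s
    rw [hω, hω, hω, hadd, hd1, h1t, ht1, hΔt, TensorProduct.add_tmul, TensorProduct.tmul_add]
    refine keyW_comm p _ _ _ _ ?_ ?_ ?_ ?_ ?_ ?_ <;>
      simp [Commute, SemiconjBy, Algebra.TensorProduct.tmul_mul_tmul, hab]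
  · intro α r
    rw [map_smul, omega, omega, Finset.smul_sum]
    refine Finset.sum_congr rfl (fun i hi => ?_)
    obtain ⟨h1, h2⟩ := Finset.mem_Ico.mp hi
    simp only [smul_pow, TensorProduct.smul_tmul', TensorProduct.tmul_smul, smul_smul]
    have hsc : (((Nat.factorial (p - 1) / (Nat.factorial i * Nat.factorial (p - i)) : ℕ) : k))
          * (α ^ (p - i) * α ^ i)
        = α ^ p * (((Nat.factorial (p - 1) /
            (Nat.factorial i * Nat.factorial (p - i)) : ℕ) : k)) := by
      rw [← pow_add, Nat.sub_add_cancel (le_of_lt h2)]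
      ring
    rw [hsc]
end

section
/- Let T = (g, h, ρ) be an abelian type and let z and z′ be two bases of g. Then Ker ρ_z = Im Φ_z on h if and only if Ker ρ_{z′} = Im Φ_{z′} on h. Hence the permissibility of T does not depend on the choice of basis of g. -/
set_option linter.unusedSectionVars false

open scoped TensorProduct

attribute [local instance 100] LieRing.ofAssociativeRing

namespace PD

section PermSmul

variable (p : ℕ) [Fact (Nat.Prime p)] (k : Type) [Field k] [CharP k p]
variable (V : Type) [AddCommGroup V] [Module k V] [AbRes p k V]

lemma phiV_smul (c : k) (lam : k) (f : Module.End k V) (r : V) :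
    PhiV p k V (c ^ (p - 1) * lam) (c • f) (c • r) = c ^ p • PhiV p k V lam f r := by
  have hp1 : p - 1 + 1 = p := Nat.succ_pred_eq_of_pos (Fact.out : Nat.Prime p).pos
  have hcp : c ^ p = c ^ (p - 1) * c := by rw [← pow_succ, hp1]
  unfold PhiV
  rw [AbRes.pMap_smul (p := p) (k := k), smul_pow]
  simp only [LinearMap.smul_apply, LinearMap.map_smul, hcp]
  rw [smul_add, smul_sub, smul_smul, smul_smul, smul_smul]
  ring_nf

lemma perm_smul (c : k) (hc : c ≠ 0) (lam : k) (f : Module.End k V)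
    (h : Permissible p k V lam f) :
    Permissible p k V (c ^ (p - 1) * lam) (c • f) := by
  unfold Permissible at h ⊢
  have key := phiV_smul p k V c lam f
  ext r
  simp only [Set.mem_setOf_eq, LinearMap.smul_apply, smul_eq_zero, hc, false_or]
  constructor
  · intro hr
    have hmem : (c ^ p)⁻¹ • r ∈ {r : V | f r = 0} := by
      simp only [Set.mem_setOf_eq, LinearMap.map_smul, hr, smul_zero]
    rw [h] at hmem
    obtain ⟨s, hs⟩ := hmem
    refine ⟨c • s, ?_⟩
    rw [key, hs, smul_smul, mul_inv_cancel₀ (pow_ne_zero _ hc), one_smul]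
  · rintro ⟨s, rfl⟩
    have : PhiV p k V (c ^ (p - 1) * lam) (c • f) s
        = c ^ p • PhiV p k V lam f (c⁻¹ • s) := by
      rw [← key, smul_smul, mul_inv_cancel₀ hc, one_smul]
    have hker : PhiV p k V lam f (c⁻¹ • s) ∈ {r : V | f r = 0} := by
      rw [h]; exact ⟨_, rfl⟩
    rw [Set.mem_setOf_eq] at hker
    rw [this, LinearMap.map_smul, hker, smul_zero]

end PermSmul

end PD

open PD in
/-- Let `T = (g, h, ρ)` be an abelian type and let `z` and `z'` be two
bases of `g`.  Then `Ker ρ_z = Im Φ_z` on `h` if and only if `Ker ρ_{z'} = Im Φ_{z'}`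
on `h`.  Hence the permissibility of `T` does not depend on the choice of basis of `g`. -/
theorem permissible_independent_of_basis
    (p n : ℕ) [Fact (Nat.Prime p)] (k : Type) [Field k] [CharP k p] [IsAlgClosed k]
    (G V : Type) [AddCommGroup G] [Module k G] [AddCommGroup V] [Module k V]
    [AbRes p k G] [AbRes p k V]
    (ρ : G →ₗ[k] Module.End k V) (hrep : IsAlgebraicRep p k ρ)
    (hg : Module.finrank k G = 1) (hh : Module.finrank k V = n) (hn : 1 ≤ n)
    (z z' : G)
    (hz : Submodule.span k {z} = ⊤) (hz' : Submodule.span k {z'} = ⊤)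
    (hz0 : z ≠ 0) (hz0' : z' ≠ 0)
    (lam lam' : k)
    (hlam : AbRes.pMap (p := p) (k := k) z = lam • z)
    (hlam' : AbRes.pMap (p := p) (k := k) z' = lam' • z') :
    Permissible p k V lam (ρ z) ↔ Permissible p k V lam' (ρ z') := by
  -- z' = c • z for some nonzero c
  have hz'mem : z' ∈ Submodule.span k ({z} : Set G) := hz ▸ Submodule.mem_top
  obtain ⟨c, hc⟩ := Submodule.mem_span_singleton.1 hz'mem
  have hc0 : c ≠ 0 := by rintro rfl; rw [zero_smul] at hc; exact hz0' hc.symm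
  have hp1 : p - 1 + 1 = p := Nat.succ_pred_eq_of_pos (Fact.out : Nat.Prime p).pos
  -- relation between lam and lam'
  have hlamrel : lam' = c ^ (p - 1) * lam := by
    have h1 : AbRes.pMap (p := p) (k := k) z' = (c ^ p * lam) • z := by
      rw [← hc, AbRes.pMap_smul (p := p) (k := k), hlam, smul_smul]
    rw [hlam', ← hc, smul_smul] at h1
    have h2 : lam' * c = c ^ p * lam := by
      by_contra hne
      have := sub_eq_zero.2 h1
      rw [← sub_smul, smul_eq_zero] at this
      rcases this with h | h
      · exact hne (sub_eq_zero.1 h)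
      · exact hz0 h
    apply mul_right_cancel₀ hc0
    have hcp : c ^ p = c ^ (p - 1) * c := by rw [← pow_succ, hp1]
    rw [h2, hcp]; ring
  have hρ : ρ z' = c • ρ z := by rw [← hc, map_smul]
  constructor
  · intro h
    rw [hlamrel, hρ]
    exact perm_smul p k V c hc0 lam (ρ z) h
  · intro h
    have h' := perm_smul p k V c⁻¹ (inv_ne_zero hc0) lam' (ρ z') h
    have e1 : (c⁻¹) ^ (p - 1) * lam' = lam := by
      rw [hlamrel, inv_pow, ← mul_assoc,
        inv_mul_cancel₀ (pow_ne_zero _ hc0), one_mul]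
    have e2 : c⁻¹ • ρ z' = ρ z := by
      rw [hρ, smul_smul, inv_mul_cancel₀ hc0, one_smul]
    rwa [e1, e2] at h'
end
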